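/- Let θ ∈ (0,1). Let e : (−∞, 0] → ℝ be differentiable and nonnegative, and let ℓ : (−∞, 0] → ℝ be continuous and nonnegative. Assume that for all τ ≤ 0 one has e(τ) ≤ ℓ(τ)^{1/θ} and e′(τ) ≥ ℓ(τ)². Then for all τ′ ≤ τ ≤ 0, (1 − θ) · ∫_{τ′}^{τ} ℓ(s) ds ≤ e(τ)^{1−θ} − e(τ′)^{1−θ}. -/

import Mathlib

open Set Filter Real Topology MeasureTheory

private lemma rpow_add_le_add_rpow' {a b p : ℝ} (ha : 0 ≤ a) (hb : 0 ≤ b)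
    (hp : 0 ≤ p) (hp1 : p ≤ 1) : (a + b) ^ p ≤ a ^ p + b ^ p := by
  have h := NNReal.rpow_add_le_add_rpow a.toNNReal b.toNNReal hp hp1
  have h' := NNReal.coe_le_coe.2 h
  simpa [NNReal.coe_rpow, Real.coe_toNNReal a ha, Real.coe_toNNReal b hb,
    NNReal.coe_add] using h'

/-- **Łojasiewicz's control-function argument** (abstracted from Lemma 6.7 of
Solomon–Verbitsky). Let `θ ∈ (0,1)`, let `e : (−∞,0] → ℝ` be differentiable and
nonnegative and `l : (−∞,0] → ℝ` continuous and nonnegative, with `e(τ) ≤ l(τ)^{1/θ}`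
and `e′(τ) ≥ l(τ)²` for all `τ ≤ 0`. Then for all `τ′ ≤ τ ≤ 0`,
`(1 − θ)·∫_{τ′}^{τ} l(s) ds ≤ e(τ)^{1−θ} − e(τ′)^{1−θ}`. -/
theorem control_function_argument
    (θ : ℝ) (hθ0 : 0 < θ) (hθ1 : θ < 1)
    (e e' l : ℝ → ℝ)
    (hderiv : ∀ τ ∈ Set.Iic (0:ℝ), HasDerivWithinAt e (e' τ) (Set.Iic (0:ℝ)) τ)
    (he : ∀ τ ∈ Set.Iic (0:ℝ), 0 ≤ e τ)
    (hlc : ContinuousOn l (Set.Iic (0:ℝ)))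
    (hl : ∀ τ ∈ Set.Iic (0:ℝ), 0 ≤ l τ)
    (h1 : ∀ τ ∈ Set.Iic (0:ℝ), e τ ≤ l τ ^ (1 / θ))
    (h2 : ∀ τ ∈ Set.Iic (0:ℝ), l τ ^ 2 ≤ e' τ) :
    ∀ τ' τ : ℝ, τ' ≤ τ → τ ≤ 0 →
      (1 - θ) * ∫ s in τ'..τ, l s ≤ e τ ^ (1 - θ) - e τ' ^ (1 - θ) := by
  intro τ' τ hττ hτ0
  have hτ'0 : τ' ≤ 0 := hττ.trans hτ0
  have hθ1' : (0:ℝ) < 1 - θ := by linarith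
  have heCont : ContinuousOn e (Iic 0) := fun x hx => (hderiv x hx).continuousWithinAt
  have hsub : Icc τ' τ ⊆ Iic (0:ℝ) := fun x hx => hx.2.trans hτ0
  have hint : IntegrableOn l (Icc τ' τ) :=
    (hlc.mono hsub).integrableOn_compact isCompact_Icc
  -- main estimate with regularization ε > 0
  have key : ∀ ε : ℝ, 0 < ε →
      (1 - θ) * ∫ s in τ'..τ, l s ≤
        (e τ + ε) ^ (1 - θ) - (e τ' + ε) ^ (1 - θ) + (1 - θ) * ε ^ θ * (τ - τ') := by
    intro ε hε
    set F : ℝ → ℝ := fun x =>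
      (e x + ε) ^ (1 - θ) - (1 - θ) * (∫ s in τ'..x, l s) + (1 - θ) * ε ^ θ * x with hF
    have hmono : MonotoneOn F (Icc τ' τ) := by
      apply monotoneOn_of_deriv_nonneg (convex_Icc τ' τ)
      · -- continuity
        apply ContinuousOn.add
        apply ContinuousOn.sub
        · exact ((heCont.mono hsub).add continuousOn_const).rpow_const
            (fun x hx => Or.inl (by have := he x (hsub hx); show e x + ε ≠ 0; exact ne_of_gt (by linarith)))
        · apply continuousOn_const.mul
          have := intervalIntegral.continuousOn_primitive_interval
            (f := l) (μ := volume) (a := τ')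
            (b := τ) (by rwa [uIcc_of_le hττ])
          rwa [uIcc_of_le hττ] at this
        · exact (continuousOn_const.mul continuousOn_id)
      · -- differentiability on the interior
        rw [interior_Icc]
        intro x hx
        have hx0 : x < 0 := lt_of_lt_of_le hx.2 hτ0
        have hmem : Iic (0:ℝ) ∈ 𝓝 x := Iic_mem_nhds hx0
        have hde : HasDerivAt e (e' x) x := (hderiv x hx0.le).hasDerivAt hmem
        have hpos : 0 < e x + ε := by have := he x hx0.le; linarith
        have h1' : HasDerivAt (fun y => (e y + ε) ^ (1 - θ))
            (e' x * (1 - θ) * (e x + ε) ^ (1 - θ - 1)) x :=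
          (hde.add_const ε).rpow_const (Or.inl hpos.ne')
        have hii : IntervalIntegrable l volume τ' x := by
          apply IntegrableOn.intervalIntegrable
          apply hint.mono_set
          rw [uIcc_of_le hx.1.le]
          exact Icc_subset_Icc le_rfl hx.2.le
        have hint' : HasDerivAt (fun y => ∫ s in τ'..y, l s) (l x) x :=
          intervalIntegral.integral_hasDerivAt_right hii
            ⟨Iic 0, hmem, hlc.aestronglyMeasurable measurableSet_Iic⟩
            (hlc.continuousAt hmem)
        have hDF : HasDerivAt F
            (e' x * (1 - θ) * (e x + ε) ^ (1 - θ - 1) - (1 - θ) * l x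
              + (1 - θ) * ε ^ θ * 1) x :=
          (h1'.sub (hint'.const_mul (1 - θ))).add ((hasDerivAt_id x).const_mul ((1 - θ) * ε ^ θ))
        exact ⟨_, hDF.hasFDerivAt.hasFDerivWithinAt⟩
      · -- nonnegativity of derivative
        rw [interior_Icc]
        intro x hx
        have hx0 : x < 0 := lt_of_lt_of_le hx.2 hτ0
        have hmem : Iic (0:ℝ) ∈ 𝓝 x := Iic_mem_nhds hx0
        have hde : HasDerivAt e (e' x) x := (hderiv x hx0.le).hasDerivAt hmem
        have hpos : 0 < e x + ε := by have := he x hx0.le; linarith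
        have h1' : HasDerivAt (fun y => (e y + ε) ^ (1 - θ))
            (e' x * (1 - θ) * (e x + ε) ^ (1 - θ - 1)) x :=
          (hde.add_const ε).rpow_const (Or.inl hpos.ne')
        have hii : IntervalIntegrable l volume τ' x := by
          apply IntegrableOn.intervalIntegrable
          apply hint.mono_set
          rw [uIcc_of_le hx.1.le]
          exact Icc_subset_Icc le_rfl hx.2.le
        have hint' : HasDerivAt (fun y => ∫ s in τ'..y, l s) (l x) x :=
          intervalIntegral.integral_hasDerivAt_right hii
            ⟨Iic 0, hmem, hlc.aestronglyMeasurable measurableSet_Iic⟩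
            (hlc.continuousAt hmem)
        have hDF : HasDerivAt F
            (e' x * (1 - θ) * (e x + ε) ^ (1 - θ - 1) - (1 - θ) * l x
              + (1 - θ) * ε ^ θ * 1) x :=
          (h1'.sub (hint'.const_mul (1 - θ))).add ((hasDerivAt_id x).const_mul ((1 - θ) * ε ^ θ))
        rw [hDF.deriv]
        -- now the pointwise inequality
        have hL : 0 ≤ l x := hl x hx0.le
        have hd : (0:ℝ) ≤ ε ^ θ := rpow_nonneg hε.le θ
        set t : ℝ := (e x + ε) ^ θ with hts
        have ht : 0 < t := rpow_pos_of_pos hpos θ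
        have heθ : e x ^ θ ≤ l x := by
          have h := Real.rpow_le_rpow (he x hx0.le) (h1 x hx0.le) hθ0.le
          rwa [← Real.rpow_mul (hl x hx0.le), one_div, inv_mul_cancel₀ hθ0.ne',
            Real.rpow_one] at h
        have htle : t ≤ l x + ε ^ θ := by
          have := rpow_add_le_add_rpow' (he x hx0.le) hε.le hθ0.le hθ1.le
          calc t ≤ e x ^ θ + ε ^ θ := this
            _ ≤ l x + ε ^ θ := by linarith
        have hneg : (e x + ε) ^ (1 - θ - 1) = t⁻¹ := by
          rw [show (1 - θ - 1 : ℝ) = -θ by ring, Real.rpow_neg hpos.le]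
        rw [hneg]
        have hq : (l x - ε ^ θ) * t ≤ l x ^ 2 := by
          rcases le_or_gt (l x) (ε ^ θ) with h | h
          · have hh : (l x - ε ^ θ) * t ≤ 0 :=
              mul_nonpos_of_nonpos_of_nonneg (by linarith) ht.le
            nlinarith
          · have hh := mul_le_mul_of_nonneg_left htle (by linarith : 0 ≤ l x - ε ^ θ)
            nlinarith
        have hq2 : l x - ε ^ θ ≤ l x ^ 2 * t⁻¹ := by
          rw [← le_div_iff₀ ht] at hq
          rwa [div_eq_mul_inv] at hq
        have hq3 : l x ^ 2 * t⁻¹ ≤ e' x * t⁻¹ :=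
          mul_le_mul_of_nonneg_right (h2 x hx0.le) (inv_nonneg.2 ht.le)
        have hq4 : l x - ε ^ θ ≤ e' x * t⁻¹ := hq2.trans hq3
        nlinarith [mul_le_mul_of_nonneg_left hq4 hθ1'.le]
    have hFF := hmono (left_mem_Icc.2 hττ) (right_mem_Icc.2 hττ) hττ
    simp only [hF, intervalIntegral.integral_same] at hFF
    linarith
  -- take the limit ε → 0⁺
  have h0 : Tendsto (fun ε : ℝ => ε) (𝓝[>] (0:ℝ)) (𝓝 0) :=
    tendsto_id.mono_right nhdsWithin_le_nhds
  have hc : ∀ c : ℝ, 0 ≤ c →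
      Tendsto (fun ε : ℝ => (c + ε) ^ (1 - θ)) (𝓝[>] (0:ℝ)) (𝓝 (c ^ (1 - θ))) := by
    intro c hcn
    have hco : ContinuousAt (fun x : ℝ => x ^ (1 - θ)) c :=
      Real.continuousAt_rpow_const c _ (Or.inr hθ1'.le)
    have hadd : Tendsto (fun ε : ℝ => c + ε) (𝓝[>] (0:ℝ)) (𝓝 c) := by
      simpa using tendsto_const_nhds.add h0
    exact hco.tendsto.comp hadd
  have hεθ : Tendsto (fun ε : ℝ => (1 - θ) * ε ^ θ * (τ - τ')) (𝓝[>] (0:ℝ)) (𝓝 0) := by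
    have hp : Tendsto (fun ε : ℝ => ε ^ θ) (𝓝[>] (0:ℝ)) (𝓝 0) := by
      have := (Real.continuousAt_rpow_const 0 θ (Or.inr hθ0.le)).tendsto.comp h0
      simpa [Function.comp_def, Real.zero_rpow hθ0.ne'] using this
    have := (hp.const_mul (1 - θ)).mul_const (τ - τ')
    simpa using this
  have hlim : Tendsto (fun ε : ℝ =>
      (e τ + ε) ^ (1 - θ) - (e τ' + ε) ^ (1 - θ) + (1 - θ) * ε ^ θ * (τ - τ'))
      (𝓝[>] (0:ℝ)) (𝓝 (e τ ^ (1 - θ) - e τ' ^ (1 - θ))) := by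
    have := ((hc (e τ) (he τ hτ0)).sub (hc (e τ') (he τ' hτ'0))).add hεθ
    simpa using this
  exact ge_of_tendsto hlim (eventually_of_mem self_mem_nhdsWithin (fun ε hε => key ε hε))
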